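/- If A and B are positive definite symmetric 2×2 real matrices with det(A) = det(B), then det(A - B) ≤ 0, with equality if and only if A = B. -/

import Mathlib

lemma key_ineq (a b c p q r : ℝ) (ha : 0 < a) (hc : 0 < c) (hp : 0 < p) (hr : 0 < r)
    (hdA : 0 < a * c - b ^ 2) (hdet : a * c - b ^ 2 = p * r - q ^ 2) :
    (a - p) * (c - r) - (b - q) ^ 2 ≤ 0 := by
  nlinarith [sq_nonneg (a*r - p*c), sq_nonneg (b - q), sq_nonneg (b + q),
    mul_pos ha hr, mul_pos hp hc, mul_pos (mul_pos ha hr) (mul_pos hp hc),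
    sq_nonneg (a*r + p*c - 2*(a*c - b^2) - 2*b*q)]

lemma key_eq (a b c p q r : ℝ) (ha : 0 < a) (hc : 0 < c) (hp : 0 < p) (hr : 0 < r)
    (hdA : 0 < a * c - b ^ 2) (hdet : a * c - b ^ 2 = p * r - q ^ 2)
    (h0 : (a - p) * (c - r) - (b - q) ^ 2 = 0) :
    a = p ∧ b = q ∧ c = r := by
  have harpc : a * r + p * c = 2 * (a * c - b ^ 2) + 2 * b * q := by nlinarith
  have h4 : (a*r - p*c)^2 + 4*(a*c - b^2)*(b-q)^2 = 0 := by
    linear_combination (a*r + p*c + 2*(a*c-b^2) + 2*b*q) * harpc + 4*a*c*hdet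
  have hsq : (b - q) ^ 2 = 0 := by
    nlinarith [sq_nonneg (a*r - p*c), mul_nonneg hdA.le (sq_nonneg (b - q))]
  have hbq : b = q := by
    have := pow_eq_zero_iff (n := 2) (by norm_num) |>.mp hsq
    linarith [sub_eq_zero.mp this]
  subst hbq
  have hac : a * c = p * r := by nlinarith
  have h0' : (a - p) * (c - r) = 0 := by nlinarith
  rcases mul_eq_zero.mp h0' with h | h
  · have hap : a = p := by linarith
    subst hap
    have : c = r := by
      have := mul_left_cancel₀ (ne_of_gt ha) hac
      exact this
    exact ⟨rfl, rfl, this⟩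
  · have hcr : c = r := by linarith
    subst hcr
    have : a = p := by
      have : a * c = p * c := by linarith
      exact mul_right_cancel₀ (ne_of_gt hc) this
    exact ⟨this, rfl, rfl⟩

theorem stmt4 (A B : Matrix (Fin 2) (Fin 2) ℝ) (hA : A.PosDef) (hB : B.PosDef)
    (hdet : A.det = B.det) :
    (A - B).det ≤ 0 ∧ ((A - B).det = 0 ↔ A = B) := by
  have hAsym : A 1 0 = A 0 1 := by
    have := hA.1.apply 0 1; simpa using this
  have hBsym : B 1 0 = B 0 1 := by
    have := hB.1.apply 0 1; simpa using this
  have ha : 0 < A 0 0 := by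
    have := hA.dotProduct_mulVec_pos (x := ![1, 0]) (by intro h; simpa using congrFun h 0)
    simpa [dotProduct, Matrix.mulVec, Fin.sum_univ_two] using this
  have hc : 0 < A 1 1 := by
    have := hA.dotProduct_mulVec_pos (x := ![0, 1]) (by intro h; simpa using congrFun h 1)
    simpa [dotProduct, Matrix.mulVec, Fin.sum_univ_two] using this
  have hp : 0 < B 0 0 := by
    have := hB.dotProduct_mulVec_pos (x := ![1, 0]) (by intro h; simpa using congrFun h 0)
    simpa [dotProduct, Matrix.mulVec, Fin.sum_univ_two] using this
  have hr : 0 < B 1 1 := by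
    have := hB.dotProduct_mulVec_pos (x := ![0, 1]) (by intro h; simpa using congrFun h 1)
    simpa [dotProduct, Matrix.mulVec, Fin.sum_univ_two] using this
  have hdA : 0 < A 0 0 * A 1 1 - (A 0 1) ^ 2 := by
    have := hA.det_pos
    rw [Matrix.det_fin_two, hAsym] at this
    nlinarith [this]
  have hdet' : A 0 0 * A 1 1 - (A 0 1) ^ 2 = B 0 0 * B 1 1 - (B 0 1) ^ 2 := by
    rw [Matrix.det_fin_two, Matrix.det_fin_two, hAsym, hBsym] at hdet
    nlinarith [hdet]
  have hdAB : (A - B).det =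
      (A 0 0 - B 0 0) * (A 1 1 - B 1 1) - (A 0 1 - B 0 1) ^ 2 := by
    rw [Matrix.det_fin_two]
    simp [Matrix.sub_apply, hAsym, hBsym]; ring
  constructor
  · rw [hdAB]
    exact key_ineq _ _ _ _ _ _ ha hc hp hr hdA hdet'
  · constructor
    · intro h0
      rw [hdAB] at h0
      obtain ⟨h1, h2, h3⟩ := key_eq _ _ _ _ _ _ ha hc hp hr hdA hdet' h0
      ext i j
      fin_cases i <;> fin_cases j <;> simp [h1, h2, h3, hAsym, hBsym]
    · intro h; rw [h]; simp
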